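/- Let (s_n)_{n≥1} ⊆ (0,1) satisfy s_2 < 1 - s_1/(1 - s_1) and s_n ≤ s_{n-2}/2 - 2·s_{n-1} for all n ≥ 3, and define c_n := 1 - s_n for n odd and c_n := s_n for n even. Then the Haar function h of the associated RWPS satisfies h(2n+1) < h(2n) for all n ≥ 1; in particular, h is not increasing. -/
import Mathlib


theorem stmt7 (s c h : ℕ → ℝ)
    (hs : ∀ n, 1 ≤ n → s n ∈ Set.Ioo (0 : ℝ) 1)
    (h1 : s 2 < 1 - s 1 / (1 - s 1))
    (h2 : ∀ n, 3 ≤ n → s n ≤ s (n - 2) / 2 - 2 * s (n - 1))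
    (hcodd : ∀ n, 1 ≤ n → Odd n → c n = 1 - s n)
    (hceven : ∀ n, 1 ≤ n → Even n → c n = s n)
    (hh0 : h 0 = 1) (hh1 : h 1 = 1 / c 1)
    (hhrec : ∀ n, 1 ≤ n → h (n + 1) = h n * (1 - c n) / c (n + 1)) :
    (∀ n : ℕ, 1 ≤ n → h (2 * n + 1) < h (2 * n)) ∧ ¬ Monotone h := by
  have hc : ∀ n, 1 ≤ n → c n ∈ Set.Ioo (0 : ℝ) 1 := by
    intro n hn
    rcases Nat.even_or_odd n with he | ho
    · rw [hceven n hn he]; exact hs n hn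
    · rw [hcodd n hn ho]
      obtain ⟨ha, hb⟩ := hs n hn
      exact ⟨by linarith, by linarith⟩
  have hpos : ∀ n, 0 < h n := by
    intro n
    induction n with
    | zero => rw [hh0]; norm_num
    | succ k ih =>
      rcases Nat.eq_zero_or_pos k with hk | hk
      · subst hk
        rw [hh1]
        have := hc 1 le_rfl
        exact div_pos one_pos this.1
      · rw [hhrec k hk]
        obtain ⟨hk1, hk2⟩ := hc k hk
        obtain ⟨hk3, _⟩ := hc (k + 1) (by omega)
        exact div_pos (mul_pos ih (by linarith)) hk3
  have key : ∀ n : ℕ, 1 ≤ n → h (2 * n + 1) < h (2 * n) := by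
    intro n hn
    have hslt : s (2 * n + 1) < s (2 * n) := by
      have h2' := h2 (2 * n + 2) (by omega)
      have e1 : 2 * n + 2 - 2 = 2 * n := by omega
      have e2 : 2 * n + 2 - 1 = 2 * n + 1 := by omega
      rw [e1, e2] at h2'
      have hp := (hs (2 * n + 2) (by omega)).1
      have hp2 := (hs (2 * n + 1) (by omega)).1
      linarith
    have hrec := hhrec (2 * n) (by omega)
    rw [hceven (2 * n) (by omega) ⟨n, by ring⟩,
        hcodd (2 * n + 1) (by omega) ⟨n, by ring⟩] at hrec
    rw [hrec]
    have hd : (0 : ℝ) < 1 - s (2 * n + 1) := by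
      have := (hs (2 * n + 1) (by omega)).2; linarith
    rw [div_lt_iff₀ hd]
    have hhp := hpos (2 * n)
    nlinarith
  refine ⟨key, ?_⟩
  intro hm
  have h32 := key 1 le_rfl
  have := hm (show (2 : ℕ) ≤ 3 by norm_num)
  norm_num at h32
  linarith
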